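/- Let 2n = n₁d₁ + n₂d₂ + ... + n_m d_m be a partition with 1 ≤ d_i ≤ n and n_i ≥ 1, such that the multiset of terms n_i·d_i can be split into two disjoint groups each summing to n (an admissible partition). Then the degree sequence consisting of d_i repeated n_i·d_i times, for i = 1, ..., m, is realizable as the degree sequence of a 2-variegated line graph on 2n vertices. -/

import Mathlib

open SimpleGraph
open scoped Classical

/-- A graph is 2-variegated (bivariegated) if its vertex set can be partitioned into
two equinumerous parts such that every vertex is adjacent to exactly one vertex
of the part not containing it. -/
def SimpleGraph.IsBivariegated {V : Type*} (G : SimpleGraph V) : Prop :=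
  ∃ f : V → Bool,
    Nonempty ({v // f v = true} ≃ {v // f v = false}) ∧
    ∀ v : V, ∃! w : V, f w ≠ f v ∧ G.Adj v w
/-- A graph is a line graph if it is isomorphic to the line graph of some simple graph. -/
def SimpleGraph.IsLineGraph {V : Type*} (G : SimpleGraph V) : Prop :=
  ∃ (W : Type) (H : SimpleGraph W), Nonempty (G ≃g H.lineGraph)

open Finset

section Abstract
variable {V C : Type} [DecidableEq C]

noncomputable def mysig (s : V → Bool) (φ : {v // s v = true} ≃ {v // s v = false}) (v : V) : V :=
  if h : s v = true then (φ ⟨v, h⟩ : V) else (φ.symm ⟨v, by simpa using h⟩ : V)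

lemma s_mysig (s : V → Bool) (φ : {v // s v = true} ≃ {v // s v = false}) (v : V) :
    s (mysig s φ v) = ! s v := by
  unfold mysig
  by_cases h : s v = true
  · rw [dif_pos h, h]; simpa using (φ ⟨v, h⟩).2
  · rw [dif_neg h]
    have h' : s v = false := by simpa using h
    rw [h']; simpa using (φ.symm ⟨v, by simpa using h⟩).2

lemma mysig_mysig (s : V → Bool) (φ : {v // s v = true} ≃ {v // s v = false}) (v : V) :
    mysig s φ (mysig s φ v) = v := by
  unfold mysig
  by_cases h : s v = true
  · rw [dif_pos h]
    have h2 : s ((φ ⟨v, h⟩ : {v // s v = false}) : V) = false := (φ ⟨v, h⟩).2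
    rw [dif_neg (by simp [h2])]
    have : (⟨((φ ⟨v, h⟩ : {v // s v = false}) : V), by simpa using h2⟩ : {v // s v = false})
        = φ ⟨v, h⟩ := Subtype.ext rfl
    rw [this, Equiv.symm_apply_apply]
  · rw [dif_neg h]
    have h2 : s ((φ.symm ⟨v, by simpa using h⟩ : {v // s v = true}) : V) = true :=
      (φ.symm ⟨v, by simpa using h⟩).2
    rw [dif_pos h2]
    have : (⟨((φ.symm ⟨v, by simpa using h⟩ : {v // s v = true}) : V), h2⟩ : {v // s v = true})
        = φ.symm ⟨v, by simpa using h⟩ := Subtype.ext rfl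
    rw [this, Equiv.apply_symm_apply]

lemma mysig_ne (s : V → Bool) (φ : {v // s v = true} ≃ {v // s v = false}) (v : V) :
    mysig s φ v ≠ v := by
  intro h
  have := s_mysig s φ v
  rw [h] at this
  simp at this

noncomputable def myr (s : V → Bool) (φ : {v // s v = true} ≃ {v // s v = false}) (v : V) : V :=
  if s v = true then v else mysig s φ v

lemma myr_mysig (s : V → Bool) (φ : {v // s v = true} ≃ {v // s v = false}) (v : V) :
    myr s φ (mysig s φ v) = myr s φ v := by
  unfold myr
  by_cases h : s v = true
  · rw [if_pos h, if_neg (by simp [s_mysig, h]), mysig_mysig]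
  · have h' : s v = false := by simpa using h
    rw [if_neg h, if_pos (by simp [s_mysig, h'])]

lemma myr_eq_iff (s : V → Bool) (φ : {v // s v = true} ≃ {v // s v = false}) (u v : V) :
    myr s φ u = myr s φ v ↔ u = v ∨ u = mysig s φ v := by
  constructor
  · intro h
    unfold myr at h
    by_cases hu : s u = true <;> by_cases hv : s v = true
    · rw [if_pos hu, if_pos hv] at h; exact Or.inl h
    · rw [if_pos hu, if_neg hv] at h; exact Or.inr h
    · rw [if_neg hu, if_pos hv] at h
      right
      rw [← h, mysig_mysig]
    · rw [if_neg hu, if_neg hv] at h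
      left
      have := congrArg (mysig s φ) h
      rwa [mysig_mysig, mysig_mysig] at this
  · rintro (rfl | rfl)
    · rfl
    · exact myr_mysig s φ v

end Abstract
lemma key {V C : Type} [Fintype V] [DecidableEq C]
    (c : V → C) (s : V → Bool) (hcs : ∀ u v, c u = c v → s u = s v)
    (φ : {v // s v = true} ≃ {v // s v = false}) :
    ∃ G : SimpleGraph V, G.IsLineGraph ∧ G.IsBivariegated ∧
      ∀ v, G.degree v = (Finset.univ.filter fun u => c u = c v).card := by
  set σ := mysig s φ with hσdef
  set r := myr s φ with hrdef
  have hcσ : ∀ v, c (σ v) ≠ c v := fun v h => by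
    have h2 := hcs _ _ h
    rw [hσdef, s_mysig s φ v] at h2; simp at h2
  let G : SimpleGraph V := {
    Adj := fun u v => u ≠ v ∧ (c u = c v ∨ σ u = v)
    symm := by
      constructor; rintro u v ⟨h1, h2⟩
      refine ⟨Ne.symm h1, ?_⟩
      rcases h2 with h | h
      · exact Or.inl h.symm
      · right; rw [← h, hσdef, mysig_mysig]
    loopless := ⟨fun v h => h.1 rfl⟩ }
  refine ⟨G, ?_, ?_, ?_⟩
  · -- IsLineGraph
    let H : SimpleGraph (C ⊕ V) := {
      Adj := fun x y => ∃ v, (x = Sum.inl (c v) ∧ y = Sum.inr (r v)) ∨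
        (x = Sum.inr (r v) ∧ y = Sum.inl (c v))
      symm := by
        constructor; rintro x y ⟨v, ⟨rfl, rfl⟩ | ⟨rfl, rfl⟩⟩
        exacts [⟨v, Or.inr ⟨rfl, rfl⟩⟩, ⟨v, Or.inl ⟨rfl, rfl⟩⟩]
      loopless := by constructor; rintro x ⟨v, ⟨rfl, h⟩ | ⟨rfl, h⟩⟩ <;> simp at h }
    have hmem : ∀ v : V, s(Sum.inl (c v), Sum.inr (r v)) ∈ H.edgeSet := fun v =>
      (H.mem_edgeSet).2 ⟨v, Or.inl ⟨rfl, rfl⟩⟩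
    let ψ : V → H.edgeSet := fun v => ⟨s(Sum.inl (c v), Sum.inr (r v)), hmem v⟩
    have hψ : ∀ u v : V, ψ u = ψ v ↔ (c u = c v ∧ r u = r v) := by
      intro u v
      constructor
      · intro h
        have h2 := congrArg Subtype.val h
        simp only [ψ] at h2
        rw [Sym2.eq_iff] at h2
        rcases h2 with ⟨h3, h4⟩ | ⟨h3, h4⟩
        · exact ⟨Sum.inl.inj h3, Sum.inr.inj h4⟩
        · exact absurd h3 (by simp)
      · rintro ⟨h1, h2⟩
        apply Subtype.ext
        simp only [ψ]
        rw [h1, h2]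
    have hinj : Function.Injective ψ := by
      intro u v h
      rw [hψ] at h
      rcases (myr_eq_iff s φ u v).1 h.2 with h3 | h3
      · exact h3
      · exfalso
        have h4 := h.1
        rw [h3] at h4
        exact hcσ v h4
    have hsurj : Function.Surjective ψ := by
      rintro ⟨e, he⟩
      induction e using Sym2.ind with
      | _ x y =>
        obtain ⟨v, ⟨rfl, rfl⟩ | ⟨rfl, rfl⟩⟩ := (H.mem_edgeSet).1 he
        · exact ⟨v, rfl⟩
        · exact ⟨v, Subtype.ext (Sym2.eq_swap)⟩
    refine ⟨C ⊕ V, H, ⟨⟨Equiv.ofBijective ψ ⟨hinj, hsurj⟩, ?_⟩⟩⟩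
    intro u v
    show H.lineGraph.Adj (ψ u) (ψ v) ↔ G.Adj u v
    rw [lineGraph_adj_iff_exists]
    constructor
    · rintro ⟨hne, x, hxu, hxv⟩
      have hne' : u ≠ v := fun h => hne (by rw [h])
      refine ⟨hne', ?_⟩
      simp only [ψ, Sym2.mem_iff] at hxu hxv
      rcases hxu with rfl | rfl <;> rcases hxv with h | h
      · exact Or.inl (Sum.inl.inj h)
      · exact absurd h (by simp)
      · exact absurd h (by simp)
      · have hr : r u = r v := Sum.inr.inj h
        rcases (myr_eq_iff s φ u v).1 hr with h3 | h3
        · exact absurd h3 hne'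
        · right; rw [h3, hσdef, mysig_mysig]
    · rintro ⟨hne, hc | hs⟩
      · refine ⟨fun h => hne (hinj h), Sum.inl (c u), ?_, ?_⟩
        · simp [ψ]
        · simp [ψ, hc]
      · have hr : r u = r v := by
          rw [← hs, hrdef, hσdef, myr_mysig]
        refine ⟨fun h => hne (hinj h), Sum.inr (r u), ?_, ?_⟩
        · simp [ψ]
        · simp [ψ, hr]
  · -- IsBivariegated
    refine ⟨s, ⟨φ⟩, fun v => ⟨σ v, ⟨?_, ?_, ?_⟩, ?_⟩⟩
    · rw [hσdef, s_mysig s φ v]; simp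
    · exact Ne.symm (mysig_ne s φ v)
    · exact Or.inr rfl
    · rintro w ⟨hw1, hw2, hw3⟩
      rcases hw3 with hc | hσ
      · exact absurd (hcs _ _ hc.symm) hw1
      · exact hσ.symm
  · -- degree
    intro v
    have hset : G.neighborFinset v = insert (σ v) ((univ.filter fun u => c u = c v).erase v) := by
      ext u
      simp only [mem_neighborFinset, mem_insert, mem_erase, mem_filter, mem_univ, true_and]
      constructor
      · rintro ⟨hne, (hc | hσ)⟩
        · exact Or.inr ⟨Ne.symm hne, hc.symm⟩
        · exact Or.inl hσ.symm
      · rintro (rfl | ⟨hne, hc⟩)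
        · exact ⟨Ne.symm (mysig_ne s φ v), Or.inr rfl⟩
        · exact ⟨Ne.symm hne, Or.inl hc.symm⟩
    have hvmem : v ∈ (univ.filter fun u => c u = c v) := by simp
    have hpos : 0 < (univ.filter fun u => c u = c v).card := card_pos.2 ⟨v, hvmem⟩
    have hcard : #(insert (σ v) ((univ.filter fun u => c u = c v).erase v))
        = #(univ.filter fun u => c u = c v) := by
      rw [card_insert_of_notMem, card_erase_of_mem hvmem]
      · omega
      · intro hmemx
        rw [mem_erase, mem_filter] at hmemx
        exact hcσ v hmemx.2.2
    rw [← card_neighborFinset_eq_degree, ← hcard]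
    convert congrArg Finset.card hset using 2
    ext u
    simp [mem_neighborFinset]
lemma fiber_card {m : ℕ} (nn d : Fin m → ℕ) (i : Fin m) (j : Fin (nn i)) :
    #(Finset.univ.filter fun v : (i' : Fin m) × (Fin (nn i') × Fin (d i')) =>
      (v.1, (v.2.1 : ℕ)) = (i, (j : ℕ))) = d i := by
  have hset : (Finset.univ.filter fun v : (i' : Fin m) × (Fin (nn i') × Fin (d i')) =>
      (v.1, (v.2.1 : ℕ)) = (i, (j : ℕ)))
      = Finset.univ.image (fun k : Fin (d i) => (⟨i, (j, k)⟩ : (i' : Fin m) × (Fin (nn i') × Fin (d i')))) := by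
    ext v
    simp only [mem_filter, mem_univ, true_and, mem_image, Prod.mk.injEq]
    constructor
    · rintro ⟨h1, h2⟩
      rcases v with ⟨i₁, j₁, k₁⟩
      dsimp at h1 h2
      subst h1
      have hj : j₁ = j := Fin.ext h2
      subst hj
      exact ⟨k₁, rfl⟩
    · rintro ⟨k, rfl⟩
      exact ⟨rfl, rfl⟩
  rw [hset, Finset.card_image_of_injective _ (fun k k' h => by
    simpa using h), card_univ, Fintype.card_fin]

theorem admissible_partition_realizable_as_bivariegated_lineGraph
    (n m : ℕ) (nn d : Fin m → ℕ)
    (hd : ∀ i, 1 ≤ d i ∧ d i ≤ n) (hnn : ∀ i, 1 ≤ nn i)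
    (hsum : ∑ i, nn i * d i = 2 * n)
    (hadm : ∃ A : Finset (Fin m), ∑ i ∈ A, nn i * d i = n) :
    ∃ G : SimpleGraph (Fin (2 * n)), G.IsLineGraph ∧ G.IsBivariegated ∧
      (Finset.univ.val.map fun v => G.degree v)
        = ∑ i : Fin m, Multiset.replicate (nn i * d i) (d i) := by
  obtain ⟨A, hA⟩ := hadm
  have hcardV' : Fintype.card ((i : Fin m) × (Fin (nn i) × Fin (d i))) = 2 * n := by
    simpa using hsum
  let e : Fin (2 * n) ≃ (i : Fin m) × (Fin (nn i) × Fin (d i)) :=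
    Fintype.equivOfCardEq (by simp [hcardV'])
  let c : Fin (2 * n) → Fin m × ℕ := fun w => ((e w).1, ((e w).2.1 : ℕ))
  let s : Fin (2 * n) → Bool := fun w => decide ((e w).1 ∈ A)
  have hcs : ∀ u v, c u = c v → s u = s v := by
    intro u v h
    have h1 : (e u).1 = (e v).1 := congrArg Prod.fst h
    simp only [s, h1]
  -- cardinality of the "true" side
  have hsideT : Fintype.card {w : Fin (2 * n) // s w = true} = n := by
    have e1 : {w : Fin (2 * n) // s w = true}
        ≃ {v : (i : Fin m) × (Fin (nn i) × Fin (d i)) // v.1 ∈ A} :=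
      Equiv.subtypeEquiv e (fun w => by simp [s])
    rw [Fintype.card_congr e1, Fintype.card_subtype, Finset.card_filter,
      ← Finset.univ_sigma_univ, Finset.sum_sigma]
    have hinner : ∀ i : Fin m,
        (∑ _p : Fin (nn i) × Fin (d i), if i ∈ A then 1 else 0) =
          if i ∈ A then nn i * d i else 0 := by
      intro i
      by_cases h : i ∈ A <;> simp [h]
    rw [Finset.sum_congr rfl (fun i _ => hinner i), Finset.sum_ite_mem,
      Finset.univ_inter, hA]
  have hsideF : Fintype.card {w : Fin (2 * n) // s w = false} = n := by
    have e2 : {w : Fin (2 * n) // s w = false} ≃ {w : Fin (2 * n) // ¬ (s w = true)} :=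
      Equiv.subtypeEquivRight (by intro w; simp)
    rw [Fintype.card_congr e2, Fintype.card_subtype_compl, hsideT, Fintype.card_fin]
    omega
  let φ : {w : Fin (2 * n) // s w = true} ≃ {w : Fin (2 * n) // s w = false} :=
    Fintype.equivOfCardEq (hsideT.trans hsideF.symm)
  obtain ⟨G, hline, hbiv, hdeg⟩ := key c s hcs φ
  refine ⟨G, hline, hbiv, ?_⟩
  have hdeg' : ∀ w, G.degree w = d (e w).1 := by
    intro w
    rw [hdeg w]
    have hcards : #(Finset.univ.filter fun u => c u = c w)
        = #(Finset.univ.filter fun v : (i' : Fin m) × (Fin (nn i') × Fin (d i')) =>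
            (v.1, (v.2.1 : ℕ)) = ((e w).1, (((e w).2.1 : Fin (nn (e w).1)) : ℕ))) := by
      apply Finset.card_equiv e
      intro u
      simp only [mem_filter, mem_univ, true_and, c]
    rw [hcards, fiber_card nn d (e w).1 (e w).2.1]
  calc (Finset.univ.val.map fun v => G.degree v)
      = Finset.univ.val.map (fun w => d (e w).1) := by
        exact Multiset.map_congr rfl (fun w _ => hdeg' w)
    _ = (Finset.univ : Finset ((i : Fin m) × (Fin (nn i) × Fin (d i)))).val.map
          (fun v => d v.1) := by
        conv_rhs => rw [← Finset.map_univ_equiv e]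
        rw [Finset.map_val, Multiset.map_map]
        rfl
    _ = ∑ i : Fin m, Multiset.replicate (nn i * d i) (d i) := by
        have hu : (Finset.univ : Finset ((i : Fin m) × (Fin (nn i) × Fin (d i)))).val
            = ∑ i : Fin m, (Finset.univ : Finset (Fin (nn i) × Fin (d i))).val.map
                (Sigma.mk i) := by
          rw [← Finset.univ_sigma_univ]
          rfl
        rw [hu, ← Multiset.coe_mapAddMonoidHom, map_sum]
        apply Finset.sum_congr rfl
        intro i _
        rw [Multiset.coe_mapAddMonoidHom, Multiset.map_map]
        have : ((fun v : (i : Fin m) × (Fin (nn i) × Fin (d i)) => d v.1) ∘ Sigma.mk i)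
            = fun _ => d i := rfl
        rw [this, Multiset.map_const']
        congr 1
        simp [Finset.card_univ]
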